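/- (Antiderivative claim in the proof of Proposition 1.) Let σ > 0, δ > 0 and a, b, x ∈ ℝ. Then for every t ∈ ℝ, the derivative with respect to t of the function t ↦ (1/2) · k_{√(δ² + a²σ²)}(a x + b) · erf( (a σ² (a t + b) + δ² (t − x)) / (δ σ √(2(δ² + a²σ²))) ) equals k_δ(a t + b) · k_σ(x − t). -/

import Mathlib

open MeasureTheory

/-- One-dimensional Gaussian kernel `k_σ(x) = (√(2π) σ)⁻¹ exp(−x²/(2σ²))`. -/
noncomputable def gauss1 (σ x : ℝ) : ℝ :=
  (Real.sqrt (2 * Real.pi) * σ)⁻¹ * Real.exp (-x ^ 2 / (2 * σ ^ 2))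

/-- The error function `erf(x) = (2/√π) ∫₀ˣ e^{−t²} dt`. -/
noncomputable def erf (x : ℝ) : ℝ :=
  (2 / Real.sqrt Real.pi) * ∫ t in (0 : ℝ)..x, Real.exp (-t ^ 2)

theorem erf_hasDerivAt (y : ℝ) :
    HasDerivAt erf (2 / Real.sqrt Real.pi * Real.exp (-y ^ 2)) y := by
  have h : Continuous fun t : ℝ => Real.exp (-t ^ 2) := by continuity
  exact ((h.integral_hasStrictDerivAt 0 y).hasDerivAt).const_mul (2 / Real.sqrt Real.pi)

theorem antiderivative_claim (σ δ a b x : ℝ) (hσ : 0 < σ) (hδ : 0 < δ) (t : ℝ) :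
    HasDerivAt
      (fun s : ℝ => (1 / 2) * gauss1 (Real.sqrt (δ ^ 2 + a ^ 2 * σ ^ 2)) (a * x + b) *
        erf ((a * σ ^ 2 * (a * s + b) + δ ^ 2 * (s - x)) /
          (δ * σ * Real.sqrt (2 * (δ ^ 2 + a ^ 2 * σ ^ 2)))))
      (gauss1 δ (a * t + b) * gauss1 σ (x - t)) t := by
  set E := δ ^ 2 + a ^ 2 * σ ^ 2 with hEdef
  have hE : 0 < E := by positivity
  set D := δ * σ * Real.sqrt (2 * E) with hDdef
  have hD : 0 < D := by positivity
  set u := (a * σ ^ 2 * (a * t + b) + δ ^ 2 * (t - x)) / D with hudef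
  have hinner : HasDerivAt
      (fun s : ℝ => (a * σ ^ 2 * (a * s + b) + δ ^ 2 * (s - x)) / D)
      ((a * σ ^ 2 * a + δ ^ 2 * 1) / D) t := by
    apply HasDerivAt.div_const
    simpa [Pi.add_def] using ((((hasDerivAt_id t).const_mul a).add_const b).const_mul (a * σ ^ 2)).add
      (((hasDerivAt_id t).sub_const x).const_mul (δ ^ 2))
  have hcomp := ((erf_hasDerivAt u).comp t hinner).const_mul
    ((1 / 2) * gauss1 (Real.sqrt E) (a * x + b))
  refine hcomp.congr_deriv (Eq.symm ?_)
  have hπ : 0 < Real.pi := Real.pi_pos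
  have hsqrtπ : Real.sqrt Real.pi > 0 := Real.sqrt_pos.mpr hπ
  have hsqrtE : Real.sqrt E > 0 := Real.sqrt_pos.mpr hE
  have hsqE : Real.sqrt E ^ 2 = E := Real.sq_sqrt hE.le
  have hsq2E : Real.sqrt (2 * E) ^ 2 = 2 * E := Real.sq_sqrt (by positivity)
  have hsqπ : Real.sqrt Real.pi ^ 2 = Real.pi := Real.sq_sqrt hπ.le
  have h2π : Real.sqrt (2 * Real.pi) = Real.sqrt 2 * Real.sqrt Real.pi :=
    Real.sqrt_mul (by norm_num) _
  have h2E : Real.sqrt (2 * E) = Real.sqrt 2 * Real.sqrt E :=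
    Real.sqrt_mul (by norm_num) _
  have hsq2 : Real.sqrt 2 ^ 2 = 2 := Real.sq_sqrt (by norm_num)
  have hs2 : (0:ℝ) < Real.sqrt 2 := by positivity
  -- exponent identity
  have hexp : -(a * t + b) ^ 2 / (2 * δ ^ 2) + -(x - t) ^ 2 / (2 * σ ^ 2)
      = -(a * x + b) ^ 2 / (2 * Real.sqrt E ^ 2) + -u ^ 2 := by
    rw [hsqE, hudef]
    have hD2 : D ^ 2 = δ ^ 2 * σ ^ 2 * (2 * E) := by
      rw [hDdef]; rw [mul_pow, mul_pow, hsq2E]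
    rw [div_pow, hD2, hEdef]
    field_simp
    ring
  -- constants
  have hconst : ((Real.sqrt (2*Real.pi) * δ)⁻¹ * (Real.sqrt (2*Real.pi) * σ)⁻¹)
      = 1 / 2 * (Real.sqrt (2*Real.pi) * Real.sqrt E)⁻¹ * (2 / Real.sqrt Real.pi)
        * ((a * σ ^ 2 * a + δ ^ 2 * 1) / D) := by
    rw [hDdef, h2π, h2E]
    have haE : a * σ ^ 2 * a + δ ^ 2 * 1 = E := by rw [hEdef]; ring
    rw [haE]
    field_simp
    linear_combination hsqE
  simp only [gauss1]
  rw [mul_mul_mul_comm, ← Real.exp_add, hexp, hconst, Real.exp_add]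
  ring
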